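/- The provider's objective G(ȳ) = (w̄/ȳ − 1/(μ + N − ȳ)²) * (ȳ − N) is strictly concave on the interval [N, N + μ). -/

import Mathlib

private lemma aux_deriv1 (wbar Nr c μ x : ℝ) (hx0 : x ≠ 0) (hcx : c - x ≠ 0) :
    HasDerivAt (fun y : ℝ => wbar - wbar * Nr * y⁻¹ + (c - y)⁻¹ - μ * ((c - y) ^ 2)⁻¹)
      (wbar * Nr * (x ^ 2)⁻¹ + ((c - x) ^ 2)⁻¹ - 2 * μ * ((c - x) ^ 3)⁻¹) x := by
  have hB : HasDerivAt (fun y : ℝ => c - y) (-1) x := (hasDerivAt_id x).const_sub c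
  have hA : HasDerivAt (fun y : ℝ => y⁻¹) (-(x ^ 2)⁻¹) x := hasDerivAt_inv hx0
  have hBi : HasDerivAt (fun y : ℝ => (c - y)⁻¹) (-(-1) / (c - x) ^ 2) x := hB.inv hcx
  have hB2i : HasDerivAt (fun y : ℝ => ((c - y) ^ 2)⁻¹)
      (-((2 : ℕ) * (c - x) ^ (2 - 1) * (-1)) / ((c - x) ^ 2) ^ 2) x :=
    (hB.pow 2).inv (pow_ne_zero 2 hcx)
  have h := (((hasDerivAt_const x wbar).sub (hA.const_mul (wbar * Nr))).add hBi).sub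
    (hB2i.const_mul μ)
  refine h.congr_deriv ?_
  push_cast
  field_simp
  ring

private lemma aux_deriv2 (wbar Nr c μ x : ℝ) (hx0 : x ≠ 0) (hcx : c - x ≠ 0) :
    HasDerivAt (fun y : ℝ => wbar * Nr * (y ^ 2)⁻¹ + ((c - y) ^ 2)⁻¹ - 2 * μ * ((c - y) ^ 3)⁻¹)
      (-2 * wbar * Nr * (x ^ 3)⁻¹ + 2 * ((c - x) ^ 3)⁻¹ - 6 * μ * ((c - x) ^ 4)⁻¹) x := by
  have hB : HasDerivAt (fun y : ℝ => c - y) (-1) x := (hasDerivAt_id x).const_sub c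
  have hA : HasDerivAt (fun y : ℝ => (y ^ 2)⁻¹)
      (-((2 : ℕ) * x ^ (2 - 1)) / (x ^ 2) ^ 2) x :=
    (hasDerivAt_pow 2 x).inv (pow_ne_zero 2 hx0)
  have hB2i : HasDerivAt (fun y : ℝ => ((c - y) ^ 2)⁻¹)
      (-((2 : ℕ) * (c - x) ^ (2 - 1) * (-1)) / ((c - x) ^ 2) ^ 2) x :=
    (hB.pow 2).inv (pow_ne_zero 2 hcx)
  have hB3i : HasDerivAt (fun y : ℝ => ((c - y) ^ 3)⁻¹)
      (-((3 : ℕ) * (c - x) ^ (3 - 1) * (-1)) / ((c - x) ^ 3) ^ 2) x :=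
    (hB.pow 3).inv (pow_ne_zero 3 hcx)
  have h := ((hA.const_mul (wbar * Nr)).add hB2i).sub (hB3i.const_mul (2 * μ))
  refine h.congr_deriv ?_
  push_cast
  field_simp
  ring

/-- The provider's objective `G(ȳ) = (w̄/ȳ - 1/(μ + N - ȳ)²) * (ȳ - N)` is
strictly concave on `[N, N + μ)`. -/
theorem provider_objective_strictConcaveOn
    (N : ℕ) (hN : 0 < N) (μ wbar : ℝ) (hμ : 0 < μ) (hwbar : 0 < wbar)
    (G : ℝ → ℝ)
    (hG : ∀ y, G y = (wbar / y - 1 / (μ + (N : ℝ) - y) ^ 2) * (y - (N : ℝ))) :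
    StrictConcaveOn ℝ (Set.Ico ((N : ℝ)) ((N : ℝ) + μ)) G := by
  have hN0 : (0 : ℝ) < N := by exact_mod_cast hN
  -- abbreviations (definitional, via plain lets avoided; use explicit lambdas)
  have hFcc : StrictConcaveOn ℝ (Set.Ico ((N : ℝ)) ((N : ℝ) + μ))
      (fun y : ℝ => wbar - wbar * (N : ℝ) * y⁻¹ + (((N : ℝ) + μ) - y)⁻¹
        - μ * ((((N : ℝ) + μ) - y) ^ 2)⁻¹) := by
    apply strictConcaveOn_of_deriv2_neg (convex_Ico _ _)
    · intro x hx
      have hx0 : x ≠ 0 := ne_of_gt (lt_of_lt_of_le hN0 hx.1)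
      have hcx : ((N : ℝ) + μ) - x ≠ 0 := ne_of_gt (by linarith [hx.2])
      exact (aux_deriv1 wbar (N : ℝ) ((N : ℝ) + μ) μ x hx0 hcx).continuousAt.continuousWithinAt
    · intro x hx
      rw [interior_Ico] at hx
      have hx0' : (0 : ℝ) < x := lt_trans hN0 hx.1
      have hx0 : x ≠ 0 := ne_of_gt hx0'
      have hcx' : (0 : ℝ) < ((N : ℝ) + μ) - x := by linarith [hx.2]
      have hcx : ((N : ℝ) + μ) - x ≠ 0 := ne_of_gt hcx'
      have hev : deriv (fun y : ℝ => wbar - wbar * (N : ℝ) * y⁻¹ + (((N : ℝ) + μ) - y)⁻¹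
            - μ * ((((N : ℝ) + μ) - y) ^ 2)⁻¹)
          =ᶠ[nhds x] (fun y : ℝ => wbar * (N : ℝ) * (y ^ 2)⁻¹ + ((((N : ℝ) + μ) - y) ^ 2)⁻¹
            - 2 * μ * ((((N : ℝ) + μ) - y) ^ 3)⁻¹) := by
        filter_upwards [isOpen_Ioo.mem_nhds (show x ∈ Set.Ioo (0 : ℝ) ((N : ℝ) + μ)
          from ⟨hx0', hx.2⟩)] with y hy
        have hy0 : y ≠ 0 := ne_of_gt hy.1
        have hcy : ((N : ℝ) + μ) - y ≠ 0 := ne_of_gt (by linarith [hy.2])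
        exact (aux_deriv1 wbar (N : ℝ) ((N : ℝ) + μ) μ y hy0 hcy).deriv
      simp only [Function.iterate_succ, Function.iterate_zero, Function.comp_apply, id]
      rw [hev.deriv_eq, (aux_deriv2 wbar (N : ℝ) ((N : ℝ) + μ) μ x hx0 hcx).deriv]
      -- negativity of the second derivative
      have htμ : ((N : ℝ) + μ) - x < μ := by linarith [hx.1]
      have h3 : (0 : ℝ) < (x ^ 3)⁻¹ := by positivity
      have h4 : (0 : ℝ) < ((((N : ℝ) + μ) - x) ^ 4)⁻¹ := by positivity
      have hterm1 : -2 * wbar * (N : ℝ) * (x ^ 3)⁻¹ < 0 := by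
        nlinarith [mul_pos (mul_pos hwbar hN0) h3]
      have key : 2 * ((((N : ℝ) + μ) - x) ^ 3)⁻¹ - 6 * μ * ((((N : ℝ) + μ) - x) ^ 4)⁻¹
          = (2 * (((N : ℝ) + μ) - x) - 6 * μ) * ((((N : ℝ) + μ) - x) ^ 4)⁻¹ := by
        field_simp
      have hterm2 : (2 * (((N : ℝ) + μ) - x) - 6 * μ) * ((((N : ℝ) + μ) - x) ^ 4)⁻¹ < 0 :=
        mul_neg_of_neg_of_pos (by linarith) h4
      linarith [key ▸ hterm2]
  -- transfer from F to G
  have key : ∀ z ∈ Set.Ico ((N : ℝ)) ((N : ℝ) + μ), G z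
      = wbar - wbar * (N : ℝ) * z⁻¹ + (((N : ℝ) + μ) - z)⁻¹
        - μ * ((((N : ℝ) + μ) - z) ^ 2)⁻¹ := by
    intro z hz
    have hz0 : z ≠ 0 := ne_of_gt (lt_of_lt_of_le hN0 hz.1)
    have hcz : μ + (N : ℝ) - z ≠ 0 := ne_of_gt (by linarith [hz.2])
    have hcz' : ((N : ℝ) + μ) - z ≠ 0 := by intro h; apply hcz; linarith
    rw [hG]
    field_simp
    ring
  refine ⟨hFcc.1, fun x hx y hy hxy a b ha hb hab => ?_⟩
  have hmem := hFcc.1 hx hy ha.le hb.le hab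
  rw [key x hx, key y hy, key _ hmem]
  exact hFcc.2 hx hy hxy ha hb hab
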